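/- Let S ⊆ {1,…,p} be a nonempty index set with s := |S|, let L > 0 and M > 0, and suppose the weights satisfy min_{j∉S} w_j ≥ M/L and ‖w_S‖_2 ≤ M√s. Let φ > 0 satisfy ‖Xγ‖_n ≥ φ‖γ_S‖_2 for every γ ∈ ℝ^p with ‖γ_{S^c}‖_1 ≤ 2L√s·‖γ_S‖_2. Then any weighted Lasso solution β_weight satisfies, for every β ∈ ℝ^p: √s·‖(β_weight)_S − β_S‖_2 + ‖(β_weight)_{S^c}‖_1/L ≤ 3‖Xβ_S − f⁰‖_n²/(λ_init·λ_weight·M) + 3·λ_init·λ_weight·M·s/φ². -/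

import Mathlib

open Finset

private lemma sqrt_sum_sub_le {n : ℕ} (u v : Fin n → ℝ) :
    Real.sqrt (∑ i, (u i - v i)^2) ≤ Real.sqrt (∑ i, (u i)^2) + Real.sqrt (∑ i, (v i)^2) := by
  set A := Real.sqrt (∑ i, (u i)^2) with hA_def
  set B := Real.sqrt (∑ i, (v i)^2) with hB_def
  have hA0 : 0 ≤ A := Real.sqrt_nonneg _
  have hB0 : 0 ≤ B := Real.sqrt_nonneg _
  have hA : A^2 = ∑ i, (u i)^2 := Real.sq_sqrt (by positivity)
  have hB : B^2 = ∑ i, (v i)^2 := Real.sq_sqrt (by positivity)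
  have hcs : (∑ i, u i * v i)^2 ≤ (∑ i, (u i)^2) * (∑ i, (v i)^2) :=
    Finset.sum_mul_sq_le_sq_mul_sq _ _ _
  have habs : |∑ i, u i * v i| ≤ A * B := by
    rw [← Real.sqrt_sq_eq_abs]
    calc Real.sqrt ((∑ i, u i * v i)^2) ≤ Real.sqrt ((A*B)^2) := by
          apply Real.sqrt_le_sqrt; rw [mul_pow, hA, hB]; exact hcs
      _ = A*B := Real.sqrt_sq (by positivity)
  have hexp : ∑ i, (u i - v i)^2 = (∑ i, (u i)^2) - 2*(∑ i, u i * v i) + (∑ i, (v i)^2) := by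
    rw [Finset.mul_sum, ← Finset.sum_sub_distrib, ← Finset.sum_add_distrib]
    exact Finset.sum_congr rfl fun i _ => by ring
  have hle : ∑ i, (u i - v i)^2 ≤ (A+B)^2 := by
    have := neg_abs_le (∑ i, u i * v i)
    nlinarith [habs]
  calc Real.sqrt (∑ i, (u i - v i)^2) ≤ Real.sqrt ((A+B)^2) := Real.sqrt_le_sqrt hle
    _ = A + B := Real.sqrt_sq (by positivity)

set_option maxHeartbeats 1600000 in
/-- Mixed ℓ2/ℓ1 estimation part of Theorem `weight` (noiseless weighted Lasso). -/
theorem weighted_lasso_estimation_mixed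
    (n p : ℕ) (hn : 0 < n)
    (X : Matrix (Fin n) (Fin p) ℝ) (f0 : Fin n → ℝ)
    (w : Fin p → ℝ) (hw : ∀ j, 0 ≤ w j)
    (lamInit lamWeight : ℝ) (hlamInit : 0 < lamInit) (hlamWeight : 0 < lamWeight)
    (S : Finset (Fin p)) (hS : S.Nonempty)
    (L M : ℝ) (hL : 0 < L) (hM : 0 < M)
    (hwmin : ∀ j ∉ S, M / L ≤ w j)
    (hwS : Real.sqrt (∑ j ∈ S, (w j) ^ 2) ≤ M * Real.sqrt (S.card))
    (φ : ℝ) (hφ : 0 < φ)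
    (hRE : ∀ γ : Fin p → ℝ,
      (∑ j ∈ Sᶜ, |γ j|) ≤ 2 * L * Real.sqrt (S.card) * Real.sqrt (∑ j ∈ S, (γ j) ^ 2) →
      φ * Real.sqrt (∑ j ∈ S, (γ j) ^ 2) ≤ Real.sqrt ((∑ i, (X.mulVec γ i) ^ 2) / n))
    (βw : Fin p → ℝ)
    (hβw : ∀ β : Fin p → ℝ,
      (∑ i, (X.mulVec βw i - f0 i) ^ 2) / n + lamInit * lamWeight * ∑ j, w j * |βw j|
        ≤ (∑ i, (X.mulVec β i - f0 i) ^ 2) / n + lamInit * lamWeight * ∑ j, w j * |β j|)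
    (β : Fin p → ℝ) :
    Real.sqrt (S.card) * Real.sqrt (∑ j ∈ S, (βw j - β j) ^ 2)
        + (∑ j ∈ Sᶜ, |βw j|) / L
      ≤ 3 * ((∑ i, (X.mulVec (fun j => if j ∈ S then β j else 0) i - f0 i) ^ 2) / n)
            / (lamInit * lamWeight * M)
        + 3 * lamInit * lamWeight * M * S.card / φ ^ 2 := by
  have hlam : (0:ℝ) < lamInit * lamWeight := mul_pos hlamInit hlamWeight
  set lam := lamInit * lamWeight with hlam_def
  clear_value lam
  set βt : Fin p → ℝ := fun j => if j ∈ S then β j else 0 with hβt_def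
  set s : ℝ := (S.card : ℝ) with hs_def
  clear_value s
  have hs : (0:ℝ) < s := by
    rw [hs_def]; exact_mod_cast Finset.card_pos.mpr hS
  set sq : ℝ := Real.sqrt s with hsq_def
  clear_value sq
  have hsq : 0 < sq := by rw [hsq_def]; exact Real.sqrt_pos.mpr hs
  have hsq2 : sq ^ 2 = s := by rw [hsq_def]; exact Real.sq_sqrt hs.le
  set a : ℝ := Real.sqrt (∑ jj ∈ S, (βw jj - β jj) ^ 2) with ha_def
  have ha0 : 0 ≤ a := by rw [ha_def]; exact Real.sqrt_nonneg _
  set b : ℝ := ∑ jj ∈ Sᶜ, |βw jj| with hb_def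
  have hb0 : 0 ≤ b := by
    rw [hb_def]; exact Finset.sum_nonneg fun j _ => abs_nonneg _
  set Q : ℝ := (∑ i, (X.mulVec βw i - f0 i) ^ 2) / n with hQ_def
  set R : ℝ := (∑ i, (X.mulVec βt i - f0 i) ^ 2) / n with hR_def
  have hn' : (0:ℝ) < n := by exact_mod_cast hn
  have hQ0 : 0 ≤ Q := by
    rw [hQ_def]; positivity
  have hR0 : 0 ≤ R := by
    rw [hR_def]; positivity
  -- basic inequality
  have hsplit1 : ∑ j, w j * |βw j|
      = (∑ j ∈ S, w j * |βw j|) + (∑ j ∈ Sᶜ, w j * |βw j|) :=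
    (Finset.sum_add_sum_compl S _).symm
  have hsplit2 : ∑ j, w j * |βt j| = ∑ j ∈ S, w j * |β j| := by
    rw [← Finset.sum_add_sum_compl S (fun j => w j * |βt j|)]
    have hz : ∑ j ∈ Sᶜ, w j * |βt j| = 0 :=
      Finset.sum_eq_zero fun j hj => by simp [hβt_def, Finset.mem_compl.mp hj]
    have hS' : ∑ j ∈ S, w j * |βt j| = ∑ j ∈ S, w j * |β j| :=
      Finset.sum_congr rfl fun j hj => by simp [hβt_def, hj]
    rw [hz, hS', add_zero]
  have hbasic := hβw βt
  rw [hsplit1, hsplit2, ← hR_def] at hbasic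
  -- lower bound off-support weighted term
  have hbw_lower : M / L * b ≤ ∑ j ∈ Sᶜ, w j * |βw j| := by
    rw [hb_def, Finset.mul_sum]
    exact Finset.sum_le_sum fun j hj =>
      mul_le_mul_of_nonneg_right (hwmin j (Finset.mem_compl.mp hj)) (abs_nonneg _)
  -- Cauchy–Schwarz on the support
  have hcs : ∑ j ∈ S, w j * |βw j - β j| ≤ M * sq * a := by
    have h := Finset.sum_mul_sq_le_sq_mul_sq S w (fun j => |βw j - β j|)
    have habs2 : ∑ j ∈ S, |βw j - β j| ^ 2 = ∑ j ∈ S, (βw j - β j) ^ 2 :=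
      Finset.sum_congr rfl fun j _ => sq_abs _
    rw [habs2] at h
    have hnn : 0 ≤ ∑ j ∈ S, w j * |βw j - β j| :=
      Finset.sum_nonneg fun j _ => mul_nonneg (hw j) (abs_nonneg _)
    have h1 : ∑ j ∈ S, w j * |βw j - β j|
        = Real.sqrt ((∑ j ∈ S, w j * |βw j - β j|) ^ 2) := (Real.sqrt_sq hnn).symm
    rw [h1]
    calc Real.sqrt ((∑ j ∈ S, w j * |βw j - β j|) ^ 2)
        ≤ Real.sqrt ((∑ j ∈ S, (w j) ^ 2) * (∑ j ∈ S, (βw j - β j) ^ 2)) :=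
          Real.sqrt_le_sqrt h
      _ = Real.sqrt (∑ j ∈ S, (w j) ^ 2) * a := by
          rw [Real.sqrt_mul (by positivity), ha_def]
      _ ≤ (M * sq) * a := mul_le_mul_of_nonneg_right hwS ha0
  -- triangle-type bound on the support
  have htriS : ∑ j ∈ S, w j * |β j|
      ≤ (∑ j ∈ S, w j * |βw j|) + ∑ j ∈ S, w j * |βw j - β j| := by
    rw [← Finset.sum_add_distrib]
    refine Finset.sum_le_sum fun j _ => ?_
    have h1 : |β j| ≤ |βw j| + |βw j - β j| := by
      have h0 := abs_sub_abs_le_abs_sub (β j) (βw j)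
      have h2 : |β j - βw j| = |βw j - β j| := abs_sub_comm _ _
      linarith
    calc w j * |β j| ≤ w j * (|βw j| + |βw j - β j|) :=
          mul_le_mul_of_nonneg_left h1 (hw j)
      _ = w j * |βw j| + w j * |βw j - β j| := by ring
  -- the star inequality
  have star : Q + lam * (M / L * b) ≤ R + lam * (M * sq * a) := by
    have e1 := mul_le_mul_of_nonneg_left hbw_lower hlam.le
    have e2 := mul_le_mul_of_nonneg_left
      (htriS.trans (add_le_add le_rfl hcs)) hlam.le
    linarith only [hbasic, e1, e2]
  have hlamM : (0:ℝ) < lam * M := mul_pos hlam hM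
  have hφ2 : (0:ℝ) < φ ^ 2 := by positivity
  have goal_eq : 3 * R / (lam * M) + 3 * lamInit * lamWeight * M * s / φ ^ 2
      = 3 * R / (lam * M) + 3 * lam * M * s / φ ^ 2 := by rw [hlam_def]; ring
  clear_value a b Q R βt
  have main : sq * a + b / L ≤ 3 * R / (lam * M) + 3 * lam * M * s / φ ^ 2 := by
    rcases le_or_gt b (2 * L * sq * a) with hcase | hcase
    · -- RE case
      set γ : Fin p → ℝ := fun j => βw j - βt j with hγ_def
      have hγS : ∑ j ∈ S, (γ j) ^ 2 = ∑ j ∈ S, (βw j - β j) ^ 2 :=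
        Finset.sum_congr rfl fun j hj => by simp [hγ_def, hβt_def, hj]
      have hγSc : ∑ j ∈ Sᶜ, |γ j| = b := by
        rw [hb_def]
        exact Finset.sum_congr rfl fun j hj => by
          simp [hγ_def, hβt_def, Finset.mem_compl.mp hj]
      have hre := hRE γ (by rw [hγS, hγSc, ← ha_def]; exact hcase)
      have hre' : φ * a ≤ Real.sqrt ((∑ i, (X.mulVec γ i) ^ 2) / n) := by
        rw [ha_def, ← hγS]; exact hre
      have hmv : ∀ i, X.mulVec γ i
          = (X.mulVec βw i - f0 i) - (X.mulVec βt i - f0 i) := by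
        intro i
        have hfe : γ = βw - βt := by funext j; simp [hγ_def]
        rw [hfe, Matrix.mulVec_sub]
        simp [Pi.sub_apply]
      have htri : Real.sqrt ((∑ i, (X.mulVec γ i) ^ 2) / n)
          ≤ Real.sqrt Q + Real.sqrt R := by
        have heq : ∑ i, (X.mulVec γ i) ^ 2
            = ∑ i, ((X.mulVec βw i - f0 i) - (X.mulVec βt i - f0 i)) ^ 2 :=
          Finset.sum_congr rfl fun i _ => by rw [hmv i]
        rw [heq, Real.sqrt_div (by positivity), hQ_def, hR_def,
          Real.sqrt_div (by positivity), Real.sqrt_div (by positivity), ← add_div]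
        gcongr
        exact sqrt_sum_sub_le _ _
      have hrea : φ * a ≤ Real.sqrt Q + Real.sqrt R := hre'.trans htri
      clear hre hre' htri hmv hγS hγSc hRE hβw hbasic hsplit1 hsplit2 hcs htriS hbw_lower
      clear_value γ
      clear hγ_def γ
      set q := Real.sqrt Q with hq_def
      clear_value q
      set r := Real.sqrt R with hr_def
      clear_value r
      have hq2 : q ^ 2 = Q := by rw [hq_def]; exact Real.sq_sqrt hQ0
      have hr2 : r ^ 2 = R := by rw [hr_def]; exact Real.sq_sqrt hR0
      set c : ℝ := lam * M * sq / φ with hc_def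
      clear_value c
      have h3 : lam * M * sq * a ≤ c * (q + r) := by
        have h4 : lam * M * sq / φ * (φ * a) ≤ lam * M * sq / φ * (q + r) :=
          mul_le_mul_of_nonneg_left hrea
            (le_of_lt (div_pos (mul_pos hlamM hsq) hφ))
        have h4e : lam * M * sq / φ * (φ * a) = lam * M * sq * a := by
          field_simp
        rw [hc_def]
        linarith only [h4, h4e]
      have h5 : 2 * c * q ≤ c ^ 2 + q ^ 2 := by linarith only [sq_nonneg (c - q)]
      have h6 : 2 * c * r ≤ c ^ 2 + r ^ 2 := by linarith only [sq_nonneg (c - r)]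
      have hstar' : q ^ 2 + lam * (M / L * b) ≤ r ^ 2 + lam * (M * sq * a) := by
        rw [hq2, hr2]; exact star
      have key : lam * M * (sq * a) + lam * M * (b / L) ≤ 2 * R + 2 * c ^ 2 := by
        have e1 : lam * (M / L * b) = lam * M * (b / L) := by ring
        have e2 : lam * (M * sq * a) = lam * M * (sq * a) := by ring
        have e3 : lam * M * sq * a = lam * M * (sq * a) := by ring
        linarith only [h3, h5, h6, hstar', hr2, e1, e2, e3]
      have hc2' : (lam * M) ^ 2 * s / φ ^ 2 * φ ^ 2 = (lam * M) ^ 2 * s := by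
        field_simp
      have hc2 : c ^ 2 = (lam * M) ^ 2 * s / φ ^ 2 := by
        rw [hc_def, div_pow, mul_pow, hsq2]
      rw [hc2] at key
      have hk := mul_le_mul_of_nonneg_right key hφ2.le
      have hfin : (sq * a + b / L) * (lam * M * φ ^ 2)
          ≤ (3 * R / (lam * M) + 3 * lam * M * s / φ ^ 2) * (lam * M * φ ^ 2) := by
        have hr1 : (3 * R / (lam * M) + 3 * lam * M * s / φ ^ 2) * (lam * M * φ ^ 2)
            = 3 * R * φ ^ 2 + 3 * (lam * M) ^ 2 * s := by
          field_simp
        rw [hr1]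
        have hRφ : 0 ≤ R * φ ^ 2 := mul_nonneg hR0 hφ2.le
        have hls : 0 ≤ (lam * M) ^ 2 * s := mul_nonneg (sq_nonneg _) hs.le
        linarith only [hk, hc2', hRφ, hls]
      exact le_of_mul_le_mul_right hfin (mul_pos hlamM hφ2)
    · -- non-RE case
      have hL2 : (0:ℝ) < 2 * L := by linarith
      have h1 : sq * a ≤ b / (2 * L) := by
        rw [le_div_iff₀ hL2]
        linarith only [hcase]
      have h2 : lam * M * (b / (2 * L)) ≤ R := by
        have e3 : lam * M * (sq * a) ≤ lam * M * (b / (2 * L)) :=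
          mul_le_mul_of_nonneg_left h1 hlamM.le
        have e4 : lam * (M / L * b) = 2 * (lam * M * (b / (2 * L))) := by
          field_simp
        linarith only [star, hQ0, e3, e4]
      have h7 : b / (2 * L) ≤ R / (lam * M) := by
        rw [le_div_iff₀ hlamM]; linarith only [h2]
      have h8 : b / L = 2 * (b / (2 * L)) := by
        field_simp
      have h9 : 3 * R / (lam * M) = 3 * (R / (lam * M)) := by ring
      have h10 : 0 ≤ 3 * lam * M * s / φ ^ 2 :=
        div_nonneg (by linarith only [mul_pos hlamM hs]) hφ2.le
      rw [h9, h8]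
      linarith only [h1, h7, h10]
  rw [goal_eq]
  exact main
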